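/- For two unit spacelike vectors u, v in R^{2,1}, one has ⟨u,v⟩ ≥ 1 if and only if I_u ⊆ I_v or I_v ⊆ I_u, where I_w = {θ ∈ S^1 : ⟨w, (cos θ, sin θ, 1)⟩ ≥ 0}. -/

import Mathlib

noncomputable section
open Real Set

/-- The Minkowski bilinear form on `ℝ^{2,1}`. -/
def mink (u v : ℝ × ℝ × ℝ) : ℝ := u.1 * v.1 + u.2.1 * v.2.1 - u.2.2 * v.2.2

/-- The null vector `(cos θ, sin θ, 1)` in the direction `θ`. -/
def nullvec (θ : ℝ) : ℝ × ℝ × ℝ := (Real.cos θ, Real.sin θ, 1)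

/-- The arc `I_w = {θ : ⟨w, θ⃗⟩ ≥ 0}` associated to a vector `w`. -/
def Iarc (w : ℝ × ℝ × ℝ) : Set ℝ := {θ : ℝ | 0 ≤ mink w (nullvec θ)}

/-- Any point of the unit circle has the form `(cos θ, sin θ)`. -/
lemma exists_theta (x y : ℝ) (h : x ^ 2 + y ^ 2 = 1) :
    ∃ θ : ℝ, Real.cos θ = x ∧ Real.sin θ = y := by
  have hx1 : -1 ≤ x := by nlinarith [sq_nonneg y]
  have hx2 : x ≤ 1 := by nlinarith [sq_nonneg y]
  rcases le_or_gt 0 y with hy | hy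
  · refine ⟨Real.arccos x, Real.cos_arccos hx1 hx2, ?_⟩
    rw [Real.sin_arccos, show 1 - x ^ 2 = y ^ 2 by linarith]
    exact Real.sqrt_sq hy
  · refine ⟨-Real.arccos x, by rw [Real.cos_neg]; exact Real.cos_arccos hx1 hx2, ?_⟩
    rw [Real.sin_neg, Real.sin_arccos, show 1 - x ^ 2 = y ^ 2 by linarith,
      Real.sqrt_sq_eq_abs, abs_of_neg hy]
    ring

set_option maxHeartbeats 1600000 in
/-- Key lemma: containment of arcs forces the Minkowski product to be at least 1. -/
lemma incl_imp (u v : ℝ × ℝ × ℝ) (hu : mink u u = 1) (hv : mink v v = 1)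
    (h : Iarc u ⊆ Iarc v) : 1 ≤ mink u v := by
  obtain ⟨a, b, c⟩ := u
  obtain ⟨d, e, f⟩ := v
  simp only [mink] at hu hv ⊢
  by_contra ht
  push_neg at ht
  have hc : (0:ℝ) < 1 + c ^ 2 := by positivity
  have hmem : ∀ θ : ℝ, θ ∈ Iarc (a, b, c) ↔ 0 ≤ a * Real.cos θ + b * Real.sin θ - c * 1 := by
    intro θ; simp [Iarc, mink, nullvec]
  have hmem' : ∀ θ : ℝ, θ ∈ Iarc (d, e, f) ↔ 0 ≤ d * Real.cos θ + e * Real.sin θ - f * 1 := by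
    intro θ; simp [Iarc, mink, nullvec]
  -- Case A : the endpoint n₊(u) of I_u is strictly outside I_v
  rcases lt_or_ge (d * (a*c - b) + e * (b*c + a) - f * (1 + c^2)) 0 with hA | hA
  · obtain ⟨θ, hcos, hsin⟩ := exists_theta ((a*c - b)/(1 + c^2)) ((b*c + a)/(1 + c^2))
      (by field_simp; linear_combination (1 + c^2) * hu)
    have hθu : θ ∈ Iarc (a, b, c) := by
      rw [hmem θ, hcos, hsin]
      have hz : a * ((a*c - b)/(1 + c^2)) + b * ((b*c + a)/(1 + c^2)) - c * 1 = 0 := by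
        field_simp; linear_combination c * hu
      linarith [hz.ge]
    have hθv := (hmem' θ).mp (h hθu)
    rw [hcos, hsin] at hθv
    have hexp : d * ((a*c - b)/(1 + c^2)) + e * ((b*c + a)/(1 + c^2)) - f * 1
        = (d * (a*c - b) + e * (b*c + a) - f * (1 + c^2)) / (1 + c^2) := by
      field_simp
    rw [hexp, le_div_iff₀ hc, zero_mul] at hθv
    linarith
  -- Case B : the endpoint n₋(u) of I_u is strictly outside I_v
  rcases lt_or_ge (d * (a*c + b) + e * (b*c - a) - f * (1 + c^2)) 0 with hB | hB
  · obtain ⟨θ, hcos, hsin⟩ := exists_theta ((a*c + b)/(1 + c^2)) ((b*c - a)/(1 + c^2))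
      (by field_simp; linear_combination (1 + c^2) * hu)
    have hθu : θ ∈ Iarc (a, b, c) := by
      rw [hmem θ, hcos, hsin]
      have hz : a * ((a*c + b)/(1 + c^2)) + b * ((b*c - a)/(1 + c^2)) - c * 1 = 0 := by
        field_simp; linear_combination c * hu
      linarith [hz.ge]
    have hθv := (hmem' θ).mp (h hθu)
    rw [hcos, hsin] at hθv
    have hexp : d * ((a*c + b)/(1 + c^2)) + e * ((b*c - a)/(1 + c^2)) - f * 1
        = (d * (a*c + b) + e * (b*c - a) - f * (1 + c^2)) / (1 + c^2) := by
      field_simp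
    rw [hexp, le_div_iff₀ hc, zero_mul] at hθv
    linarith
  -- r = √(d²+e²) = √(1+f²)
  set r := Real.sqrt (d^2 + e^2) with hrdef
  have hr2 : r ^ 2 = 1 + f ^ 2 := by
    rw [hrdef, Real.sq_sqrt (by positivity)]; nlinarith [hv]
  have hr0 : 0 ≤ r := Real.sqrt_nonneg _
  have hrpos : 0 < r := by nlinarith [hr2, sq_nonneg f]
  have hrf : -f < r := by nlinarith [hr2, hr0]
  have hrf' : f < r := by nlinarith [hr2, hr0]
  -- Case C : the anti-center of I_v lies inside I_u (and strictly outside I_v)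
  have hrne : r ≠ 0 := ne_of_gt hrpos
  have hde : d^2 + e^2 = r^2 := by rw [hrdef, Real.sq_sqrt (by positivity)]
  rcases le_or_gt 0 (a * (-d) + b * (-e) - c * r) with hC | hC
  · obtain ⟨θ, hcos, hsin⟩ := exists_theta (-d / r) (-e / r)
      (by field_simp; linear_combination hde)
    have hθu : θ ∈ Iarc (a, b, c) := by
      rw [hmem θ, hcos, hsin]
      have hexp : a * (-d / r) + b * (-e / r) - c * 1
          = (a * (-d) + b * (-e) - c * r) / r := by field_simp
      rw [hexp, le_div_iff₀ hrpos, zero_mul]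
      linarith
    have hθv := (hmem' θ).mp (h hθu)
    rw [hcos, hsin] at hθv
    have hexp : d * (-d / r) + e * (-e / r) - f * 1
        = (-(d^2 + e^2) - f * r) / r := by field_simp; ring
    rw [hexp, le_div_iff₀ hrpos, zero_mul] at hθv
    have h1 : 0 < r * (r + f) := mul_pos hrpos (by linarith [hrf])
    nlinarith [hθv, hde, h1]
  -- Final algebraic case: ¬A, ¬B, ¬C force `mink u v ≥ 1`, a contradiction.
  -- Product of A and B gives (1+c²)·(t²-1) ≥ 0, hence t² ≥ 1.
  have hid : (d * (a*c - b) + e * (b*c + a) - f * (1 + c^2)) *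
      (d * (a*c + b) + e * (b*c - a) - f * (1 + c^2))
      = (1 + c^2) * ((a*d + b*e - c*f)^2 - 1)
        - (1 + f^2) * (a*a + b*b - c*c - 1) - (a*a + b*b) * (d*d + e*e - f*f - 1) := by
    ring
  have ht2 : 1 ≤ (a*d + b*e - c*f)^2 := by
    nlinarith [mul_nonneg hA hB, hid, hu, hv, hc]
  have ht3 : a*d + b*e - c*f ≤ -1 := by nlinarith [ht2, ht]
  -- sum of A and B: c·(ad+be) ≥ f·(1+c²)
  have hX : 0 ≤ c * (a*d + b*e) - f * (1 + c^2) := by nlinarith [hA, hB]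
  -- ¬C : c·r > -(ad+be)
  have hCr : -(a*d + b*e) < c * r := by nlinarith [hC]
  have hcpos : 0 < c := by nlinarith [hCr, ht3, hr0, hrf, hrf', mul_nonneg hr0 hr0]
  have hfc : f ≤ -c := by nlinarith [hX, ht3, hcpos]
  -- contradiction: c·r > 1 - c·f ≥ 1 + c², squaring kills it
  have hbig : 1 + c^2 < c * r := by nlinarith [hCr, ht3, hfc, hcpos]
  nlinarith [hbig, hr2, hfc, hcpos, sq_nonneg (c*r - (1 + c^2)), mul_pos hcpos hrpos]

lemma mink_comm (u v : ℝ × ℝ × ℝ) : mink u v = mink v u := by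
  simp only [mink]; ring

set_option maxHeartbeats 1600000 in
theorem stmt1 (u v : ℝ × ℝ × ℝ) (hu : mink u u = 1) (hv : mink v v = 1) :
    1 ≤ mink u v ↔ (Iarc u ⊆ Iarc v ∨ Iarc v ⊆ Iarc u) := by
  constructor
  · intro ht
    obtain ⟨a, b, c⟩ := u
    obtain ⟨d, e, f⟩ := v
    simp only [mink] at hu hv ht
    set t := a*d + b*e - c*f with hT
    have ht0 : (0:ℝ) ≤ t := by linarith
    have hw2 : (d - t*a)^2 + (e - t*b)^2 - (f - t*c)^2 = 1 - t^2 := by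
      rw [hT]; linear_combination (a*d + b*e - c*f)^2 * hu + hv
    have ht21 : 1 - t^2 ≤ 0 := by nlinarith [ht]
    rcases le_or_gt (f - t*c) 0 with hsgn | hsgn
    · left
      intro θ hθ
      simp only [Iarc, mink, nullvec, mem_setOf_eq] at hθ ⊢
      have hcs : ((d - t*a) * Real.cos θ + (e - t*b) * Real.sin θ)^2 ≤ (f - t*c)^2 := by
        nlinarith [Real.sin_sq_add_cos_sq θ, hw2, ht21,
          sq_nonneg ((d - t*a) * Real.sin θ - (e - t*b) * Real.cos θ)]
      have hXge : f - t*c ≤ (d - t*a) * Real.cos θ + (e - t*b) * Real.sin θ := by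
        nlinarith [hcs, hsgn]
      have hmul : 0 ≤ t * (a * Real.cos θ + b * Real.sin θ - c * 1) :=
        mul_nonneg ht0 hθ
      nlinarith [hmul, hXge]
    · right
      intro θ hθ
      simp only [Iarc, mink, nullvec, mem_setOf_eq] at hθ ⊢
      have hcs : ((d - t*a) * Real.cos θ + (e - t*b) * Real.sin θ)^2 ≤ (f - t*c)^2 := by
        nlinarith [Real.sin_sq_add_cos_sq θ, hw2, ht21,
          sq_nonneg ((d - t*a) * Real.sin θ - (e - t*b) * Real.cos θ)]
      have hXle : (d - t*a) * Real.cos θ + (e - t*b) * Real.sin θ ≤ f - t*c := by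
        nlinarith [hcs, hsgn]
      have hmul : 0 ≤ t * (a * Real.cos θ + b * Real.sin θ - c * 1) := by
        nlinarith [hθ, hXle]
      nlinarith [hmul, ht]
  · rintro (h | h)
    · exact incl_imp u v hu hv h
    · rw [mink_comm]; exact incl_imp v u hv hu h
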